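/- (Product formula) For finite abstract simplicial complexes G and H, and every m ≥ 1, w_m(G · H) = w_m(G) · w_m(H), where G · H is the topological (Stanley-Reisner) product. -/

import Mathlib

open Finset

variable {α : Type*} [DecidableEq α]

/-- The star `U(x) = {y ∈ G : x ⊆ y}` of a simplex `x` in the complex `G`. -/
def starC (G : Finset (Finset α)) (x : Finset α) : Finset (Finset α) :=
  G.filter (fun y => x ⊆ y)

/-- The unit ball `B(x)`: the closure of the star `U(x)`. -/
def ballC (G : Finset (Finset α)) (x : Finset α) : Finset (Finset α) :=
  G.filter (fun z => ∃ y ∈ G, x ⊆ y ∧ z ⊆ y)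

/-- The unit sphere `S(x) = B(x) \ U(x)`. -/
def sphereC (G : Finset (Finset α)) (x : Finset α) : Finset (Finset α) :=
  ballC G x \ starC G x

/-- `G` is a finite abstract simplicial complex: a finite set of nonempty finite sets
closed under taking nonempty subsets. -/
def IsComplex (G : Finset (Finset α)) : Prop :=
  (∀ x ∈ G, x.Nonempty) ∧ ∀ x ∈ G, ∀ y, y ⊆ x → y.Nonempty → y ∈ G

/-- The intersection `x_1 ∩ ... ∩ x_m` of a tuple of finite sets (for `m ≥ 1`). -/
def interTuple {m : ℕ} (X : Fin m → Finset α) : Finset α :=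
  (Finset.univ.sup X).filter (fun v => ∀ j, v ∈ X j)

/-- The `m`-th characteristic `w_m(A)`. -/
def wm (m : ℕ) (A : Finset (Finset α)) : ℤ :=
  ∑ X ∈ Fintype.piFinset (fun _ : Fin m => A),
    if interTuple X ∈ A then ∏ j, (-1 : ℤ) ^ ((X j).card - 1) else 0

/-- `U` is open in the star topology on `G`: a union of stars. -/
def SCOpen (G U : Finset (Finset α)) : Prop :=
  ∃ T ⊆ G, U = T.biUnion (fun x => starC G x)

/-- The topological (Stanley-Reisner) product `G · H`: the order complex of the
product poset, i.e. all nonempty sets of pairs `(a,b) ∈ G × H` that are pairwise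
comparable in the product (inclusion) order. -/
def prodComplex (G H : Finset (Finset ℕ)) : Finset (Finset (Finset ℕ × Finset ℕ)) :=
  (G ×ˢ H).powerset.filter (fun s => s.Nonempty ∧
    ∀ p ∈ s, ∀ q ∈ s, (p.1 ⊆ q.1 ∧ p.2 ⊆ q.2) ∨ (q.1 ⊆ p.1 ∧ q.2 ⊆ p.2))

namespace PF
abbrev P2 := Finset ℕ × Finset ℕ
def ple (p q : P2) : Prop := p.1 ⊆ q.1 ∧ p.2 ⊆ q.2
instance (p q : P2) : Decidable (ple p q) := inferInstanceAs (Decidable (_ ∧ _))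
def plt (p q : P2) : Prop := ple p q ∧ p ≠ q
instance (p q : P2) : Decidable (plt p q) := inferInstanceAs (Decidable (_ ∧ _))
def pcmp (p q : P2) : Prop := ple p q ∨ ple q p
instance (p q : P2) : Decidable (pcmp p q) := inferInstanceAs (Decidable (_ ∨ _))
def chainF (e : Finset P2) : Prop := ∀ p ∈ e, ∀ q ∈ e, pcmp p q
instance (e : Finset P2) : Decidable (chainF e) :=
  inferInstanceAs (Decidable (∀ p ∈ e, ∀ q ∈ e, pcmp p q))
def N (p : P2) : ℕ := p.1.card + p.2.card

lemma N_def (p : P2) : N p = p.1.card + p.2.card := rfl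

lemma ple_refl (p : P2) : ple p p := ⟨subset_rfl, subset_rfl⟩
lemma ple_trans {p q r : P2} (h1 : ple p q) (h2 : ple q r) : ple p r :=
  ⟨h1.1.trans h2.1, h1.2.trans h2.2⟩
lemma ple_antisymm {p q : P2} (h1 : ple p q) (h2 : ple q p) : p = q :=
  Prod.ext (subset_antisymm h1.1 h2.1) (subset_antisymm h1.2 h2.2)
lemma plt_trans_left {p q r : P2} (h1 : plt p q) (h2 : ple q r) : plt p r := by
  refine ⟨ple_trans h1.1 h2, ?_⟩
  rintro rfl
  exact h1.2 (ple_antisymm h1.1 h2)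

lemma plt_trans_right {p q r : P2} (h1 : ple p q) (h2 : plt q r) : plt p r := by
  refine ⟨ple_trans h1 h2.1, ?_⟩
  rintro rfl
  exact h2.2 (ple_antisymm h2.1 h1)

lemma eq_of_ple_of_N_le {p q : P2} (h : ple p q) (hN : N q ≤ N p) : p = q := by
  have h1 : p.1.card ≤ q.1.card := card_le_card h.1
  have h2 : p.2.card ≤ q.2.card := card_le_card h.2
  unfold N at hN
  exact Prod.ext (Finset.eq_of_subset_of_card_le h.1 (by omega))
    (Finset.eq_of_subset_of_card_le h.2 (by omega))
lemma chain_exists_max {c : Finset P2} (hc : chainF c) (hne : c.Nonempty) :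
    ∃ z ∈ c, ∀ y ∈ c, ple y z := by
  obtain ⟨z, hz, hmax⟩ := Finset.exists_max_image c N hne
  refine ⟨z, hz, fun y hy => ?_⟩
  rcases hc y hy z hz with h | h
  · exact h
  · rw [eq_of_ple_of_N_le h (hmax y hy)]; exact ple_refl _
lemma chain_exists_min {c : Finset P2} (hc : chainF c) (hne : c.Nonempty) :
    ∃ z ∈ c, ∀ y ∈ c, ple z y := by
  obtain ⟨z, hz, hmin⟩ := Finset.exists_min_image c N hne
  refine ⟨z, hz, fun y hy => ?_⟩
  rcases hc z hz y hy with h | h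
  · exact h
  · rw [eq_of_ple_of_N_le h (hmin y hy)]; exact ple_refl _

/-- the top element of a nonempty chain, as a function -/
def topOf (c : Finset P2) : P2 := (c.sup Prod.fst, c.sup Prod.snd)

lemma topOf_eq {c : Finset P2} {z : P2} (hz : z ∈ c) (hmax : ∀ y ∈ c, ple y z) :
    topOf c = z := by
  unfold topOf
  refine Prod.ext ?_ ?_
  · exact le_antisymm (Finset.sup_le fun y hy => (hmax y hy).1) (Finset.le_sup (f := Prod.fst) hz)
  · exact le_antisymm (Finset.sup_le fun y hy => (hmax y hy).2) (Finset.le_sup (f := Prod.snd) hz)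

lemma topOf_spec {c : Finset P2} (hc : chainF c) (hne : c.Nonempty) :
    topOf c ∈ c ∧ ∀ y ∈ c, ple y (topOf c) := by
  obtain ⟨z, hz, hmax⟩ := chain_exists_max hc hne
  rw [topOf_eq hz hmax]; exact ⟨hz, hmax⟩

/-- signed count of chains in `R` -/
def fC (R : Finset P2) : ℤ := ∑ e ∈ R.powerset, if chainF e then (-1 : ℤ) ^ e.card else 0

lemma chainF_subset {e e' : Finset P2} (h : e' ⊆ e) (he : chainF e) : chainF e' :=
  fun p hp q hq => he p (h hp) q (h hq)

lemma chainF_empty : chainF (∅ : Finset P2) := by intro p hp; simp at hp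

/-- the recursion: group nonempty chains by their maximum. -/
lemma fC_rec (R : Finset P2) :
    fC R = 1 - ∑ z ∈ R, fC (R.filter (fun x => plt x z)) := by
  have hsplit : fC R = 1 + ∑ e ∈ R.powerset.filter (fun e => chainF e ∧ e.Nonempty),
      (-1 : ℤ) ^ e.card := by
    rw [fC, ← Finset.sum_filter]
    rw [← Finset.sum_filter_add_sum_filter_not (R.powerset.filter fun e => chainF e)
      (fun e => e.Nonempty)]
    have h1 : (R.powerset.filter fun e => chainF e).filter (fun e => ¬ e.Nonempty) = {∅} := by
      ext e
      simp only [mem_filter, mem_powerset, mem_singleton, Finset.not_nonempty_iff_eq_empty]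
      constructor
      · rintro ⟨_, h⟩; exact h
      · rintro rfl; exact ⟨⟨empty_subset _, chainF_empty⟩, rfl⟩
    rw [h1, Finset.filter_filter, Finset.sum_singleton, Finset.card_empty, pow_zero, add_comm]
  rw [hsplit]
  have key : ∑ e ∈ R.powerset.filter (fun e => chainF e ∧ e.Nonempty), (-1 : ℤ) ^ e.card
      = ∑ x ∈ R.sigma (fun z => ((R.filter (fun x => plt x z)).powerset.filter chainF)),
        (-1 : ℤ) ^ (x.2.card + 1) := by
    apply Finset.sum_nbij' (i := fun e => (⟨topOf e, e.erase (topOf e)⟩ : (_ : P2) × Finset P2))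
      (j := fun x => insert x.1 x.2)
    · intro e he
      simp only [mem_filter, mem_powerset] at he
      obtain ⟨hsub, hch, hne⟩ := he
      obtain ⟨htm, hta⟩ := topOf_spec hch hne
      simp only [Finset.mem_sigma, mem_filter, mem_powerset]
      refine ⟨hsub htm, ?_, chainF_subset (erase_subset _ _) hch⟩
      intro x hx
      rw [Finset.mem_erase] at hx
      exact Finset.mem_filter.2 ⟨hsub hx.2, hta x hx.2, hx.1⟩
    · intro x hx
      simp only [Finset.mem_sigma, mem_filter, mem_powerset] at hx
      obtain ⟨hz, hsub, hch⟩ := hx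
      simp only [mem_filter, mem_powerset]
      refine ⟨?_, ?_, insert_nonempty _ _⟩
      · intro y hy
        rcases Finset.mem_insert.1 hy with rfl | hy
        · exact hz
        · exact Finset.mem_of_mem_filter _ (hsub hy)
      · intro p hp q hq
        rcases Finset.mem_insert.1 hp with rfl | hp <;> rcases Finset.mem_insert.1 hq with rfl | hq
        · exact Or.inl (ple_refl _)
        · exact Or.inr (Finset.mem_filter.1 (hsub hq)).2.1
        · exact Or.inl (Finset.mem_filter.1 (hsub hp)).2.1
        · exact hch p hp q hq
    · intro e he
      simp only [mem_filter, mem_powerset] at he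
      exact Finset.insert_erase (topOf_spec he.2.1 he.2.2).1
    · intro x hx
      simp only [Finset.mem_sigma, mem_filter, mem_powerset] at hx
      obtain ⟨hz, hsub, hch⟩ := hx
      have hnotmem : x.1 ∉ x.2 := by
        intro hmem
        exact (Finset.mem_filter.1 (hsub hmem)).2.2 rfl
      have htop : topOf (insert x.1 x.2) = x.1 := by
        apply topOf_eq (Finset.mem_insert_self _ _)
        intro y hy
        rcases Finset.mem_insert.1 hy with rfl | hy
        · exact ple_refl _
        · exact (Finset.mem_filter.1 (hsub hy)).2.1
      rw [Sigma.ext_iff]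
      refine ⟨htop, ?_⟩
      rw [htop]
      simp [Finset.erase_insert hnotmem]
    · intro e he
      simp only [mem_filter, mem_powerset] at he
      obtain ⟨hsub, hch, hne⟩ := he
      have htm := (topOf_spec hch hne).1
      rw [Finset.card_erase_of_mem htm]
      have : 1 ≤ e.card := Finset.card_pos.2 hne
      congr 1
      omega
  rw [key, Finset.sum_sigma]
  have : ∀ z ∈ R, ∑ e ∈ ((R.filter (fun x => plt x z)).powerset.filter chainF),
      (-1 : ℤ) ^ (e.card + 1) = - fC (R.filter (fun x => plt x z)) := by
    intro z _
    rw [fC, ← Finset.sum_filter, ← Finset.sum_neg_distrib]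
    apply Finset.sum_congr rfl
    intro e _
    rw [pow_succ]
    ring
  rw [Finset.sum_congr rfl this]
  rw [Finset.sum_neg_distrib]
  ring

/-- ordinal sum: chains factor across a split -/
lemma fC_ordinal_sum {R1 R2 : Finset P2} (hdisj : Disjoint R1 R2)
    (hcross : ∀ x ∈ R1, ∀ y ∈ R2, plt x y) :
    fC (R1 ∪ R2) = fC R1 * fC R2 := by
  rw [fC, fC, fC, ← Finset.sum_filter, ← Finset.sum_filter, ← Finset.sum_filter,
    Finset.sum_mul_sum]
  rw [← Finset.sum_product']
  apply Finset.sum_nbij' (i := fun e => (e ∩ R1, e ∩ R2)) (j := fun x => x.1 ∪ x.2)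
  · intro e he
    simp only [mem_filter, mem_powerset] at he
    simp only [Finset.mem_product, mem_filter, mem_powerset]
    exact ⟨⟨Finset.inter_subset_right, chainF_subset Finset.inter_subset_left he.2⟩,
      ⟨Finset.inter_subset_right, chainF_subset Finset.inter_subset_left he.2⟩⟩
  · intro x hx
    simp only [Finset.mem_product, mem_filter, mem_powerset] at hx
    simp only [mem_filter, mem_powerset]
    constructor
    · exact Finset.union_subset_union hx.1.1 hx.2.1
    · intro p hp q hq
      rcases Finset.mem_union.1 hp with hp1 | hp2 <;> rcases Finset.mem_union.1 hq with hq1 | hq2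
      · exact hx.1.2 p hp1 q hq1
      · exact Or.inl (hcross p (hx.1.1 hp1) q (hx.2.1 hq2)).1
      · exact Or.inr (hcross q (hx.1.1 hq1) p (hx.2.1 hp2)).1
      · exact hx.2.2 p hp2 q hq2
  · intro e he
    simp only [mem_filter, mem_powerset] at he
    rw [← Finset.inter_union_distrib_left]
    exact Finset.inter_eq_left.2 he.1
  · intro x hx
    simp only [Finset.mem_product, mem_filter, mem_powerset] at hx
    have d1 : Disjoint x.1 R2 := Finset.disjoint_of_subset_left hx.1.1 hdisj
    have d2 : Disjoint x.2 R1 := Finset.disjoint_of_subset_left hx.2.1 hdisj.symm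
    have e1 : (x.1 ∪ x.2) ∩ R1 = x.1 := by
      rw [Finset.union_inter_distrib_right, Finset.inter_eq_left.2 hx.1.1,
        (Finset.disjoint_iff_inter_eq_empty.1 d2), Finset.union_empty]
    have e2 : (x.1 ∪ x.2) ∩ R2 = x.2 := by
      rw [Finset.union_inter_distrib_right, Finset.inter_eq_left.2 hx.2.1,
        (Finset.disjoint_iff_inter_eq_empty.1 d1), Finset.empty_union]
    rw [Prod.ext_iff]; exact ⟨e1, e2⟩
  · intro e he
    simp only [mem_filter, mem_powerset] at he
    have : (e ∩ R1).card + (e ∩ R2).card = e.card := by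
      rw [← Finset.card_union_of_disjoint
        (Finset.disjoint_of_subset_left Finset.inter_subset_right
          (Finset.disjoint_of_subset_right Finset.inter_subset_right hdisj)),
        ← Finset.inter_union_distrib_left, Finset.inter_eq_left.2 he.1]
    rw [← this, pow_add]

/-- binomial: sum of signs over an interval of sets -/
lemma sum_interval_sign {p q : Finset ℕ} (hpq : p ⊆ q) :
    ∑ s ∈ q.powerset.filter (fun s => p ⊆ s), (-1 : ℤ) ^ s.card
      = if p = q then (-1 : ℤ) ^ p.card else 0 := by
  have key : ∑ s ∈ q.powerset.filter (fun s => p ⊆ s), (-1 : ℤ) ^ s.card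
      = ∑ t ∈ (q \ p).powerset, (-1 : ℤ) ^ (t.card + p.card) := by
    apply Finset.sum_nbij' (i := fun s => s \ p) (j := fun t => t ∪ p)
    · intro s hs
      simp only [mem_filter, mem_powerset] at hs ⊢
      exact Finset.sdiff_subset_sdiff hs.1 subset_rfl
    · intro t ht
      simp only [mem_filter, mem_powerset] at ht ⊢
      exact ⟨Finset.union_subset (ht.trans (Finset.sdiff_subset)) hpq, Finset.subset_union_right⟩
    · intro s hs
      simp only [mem_filter, mem_powerset] at hs
      rw [Finset.sdiff_union_self_eq_union, Finset.union_eq_left.2 hs.2]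
    · intro t ht
      simp only [mem_powerset] at ht
      rw [Finset.union_sdiff_right, Finset.sdiff_eq_self_iff_disjoint.2]
      exact Finset.disjoint_of_subset_left ht (Finset.sdiff_disjoint)
    · intro s hs
      simp only [mem_filter, mem_powerset] at hs
      congr 1
      rw [Finset.card_sdiff_of_subset hs.2, Nat.sub_add_cancel (Finset.card_le_card hs.2)]
  rw [key]
  have : ∑ t ∈ (q \ p).powerset, (-1 : ℤ) ^ (t.card + p.card)
      = (∑ t ∈ (q \ p).powerset, (-1 : ℤ) ^ t.card) * (-1 : ℤ) ^ p.card := by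
    rw [Finset.sum_mul]
    apply Finset.sum_congr rfl
    intro t _
    rw [pow_add]
  rw [this, Finset.sum_powerset_neg_one_pow_card]
  by_cases h : p = q
  · subst h; simp
  · have : q \ p ≠ ∅ := by
      intro hh
      exact h (subset_antisymm hpq (Finset.sdiff_eq_empty_iff_subset.1 hh))
    rw [if_neg this, if_neg h, zero_mul]

/-- sum of signs over nonempty subsets -/
lemma sum_nonempty_sign {a : Finset ℕ} (ha : a.Nonempty) :
    ∑ s ∈ a.powerset.filter (fun s => s.Nonempty), (-1 : ℤ) ^ s.card = -1 := by
  have h0 := Finset.sum_powerset_neg_one_pow_card (x := a)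
  rw [if_neg (Finset.nonempty_iff_ne_empty.1 ha)] at h0
  rw [← Finset.sum_filter_add_sum_filter_not a.powerset (fun s => s.Nonempty)
    (fun s => (-1 : ℤ) ^ s.card)] at h0
  have h1 : a.powerset.filter (fun s => ¬ s.Nonempty) = {∅} := by
    ext s
    simp only [mem_filter, mem_powerset, mem_singleton, Finset.not_nonempty_iff_eq_empty]
    constructor
    · rintro ⟨_, h⟩; exact h
    · rintro rfl; exact ⟨empty_subset _, rfl⟩
  rw [h1, Finset.sum_singleton, Finset.card_empty, pow_zero] at h0
  linarith

lemma sum_pair_interval {p q : P2} (hpq : ple p q) :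
    ∑ z ∈ (q.1.powerset ×ˢ q.2.powerset).filter (fun z => ple p z), (-1 : ℤ) ^ N z
      = if p = q then (-1 : ℤ) ^ N p else 0 := by
  have hfp : ((q.1.powerset ×ˢ q.2.powerset).filter (fun z => ple p z))
      = (q.1.powerset.filter (fun s => p.1 ⊆ s)) ×ˢ (q.2.powerset.filter (fun s => p.2 ⊆ s)) := by
    rw [← Finset.filter_product]
    rfl
  rw [hfp]
  have : ∀ z : P2, (-1 : ℤ) ^ N z = (-1 : ℤ) ^ z.1.card * (-1 : ℤ) ^ z.2.card := by
    intro z; rw [N, pow_add]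
  rw [Finset.sum_congr rfl (fun z _ => this z), Finset.sum_product]
  dsimp only
  rw [← Finset.sum_mul_sum, sum_interval_sign hpq.1, sum_interval_sign hpq.2]
  by_cases h1 : p.1 = q.1 <;> by_cases h2 : p.2 = q.2
  · rw [if_pos h1, if_pos h2, if_pos (Prod.ext h1 h2), N, pow_add]
  · rw [if_pos h1, if_neg h2, mul_zero, if_neg (fun h => h2 (by rw [h]))]
  · rw [if_neg h1, zero_mul, if_neg (fun h => h1 (by rw [h]))]
  · rw [if_neg h1, zero_mul, if_neg (fun h => h1 (by rw [h]))]

lemma sum_pair_nonempty {q : P2} (h1 : q.1.Nonempty) (h2 : q.2.Nonempty) :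
    ∑ z ∈ (q.1.powerset ×ˢ q.2.powerset).filter (fun z => z.1.Nonempty ∧ z.2.Nonempty),
      (-1 : ℤ) ^ N z = 1 := by
  rw [Finset.filter_product]
  have : ∀ z : P2, (-1 : ℤ) ^ N z = (-1 : ℤ) ^ z.1.card * (-1 : ℤ) ^ z.2.card := by
    intro z; rw [N, pow_add]
  rw [Finset.sum_congr rfl (fun z _ => this z), Finset.sum_product]
  dsimp only
  rw [← Finset.sum_mul_sum, sum_nonempty_sign h1, sum_nonempty_sign h2]
  norm_num

def OI (p q : P2) : Finset P2 :=
  (q.1.powerset ×ˢ q.2.powerset).filter (fun z => ple p z ∧ z ≠ p ∧ z ≠ q)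

def DS (q : P2) : Finset P2 :=
  (q.1.powerset ×ˢ q.2.powerset).filter (fun z => z.1.Nonempty ∧ z.2.Nonempty ∧ z ≠ q)

lemma mem_OI {p q z : P2} : z ∈ OI p q ↔ ple z q ∧ ple p z ∧ z ≠ p ∧ z ≠ q := by
  simp only [OI, mem_filter, Finset.mem_product, mem_powerset]
  exact ⟨fun ⟨⟨h1, h2⟩, h⟩ => ⟨⟨h1, h2⟩, h⟩, fun ⟨⟨h1, h2⟩, h⟩ => ⟨⟨h1, h2⟩, h⟩⟩

lemma mem_DS {q z : P2} : z ∈ DS q ↔ ple z q ∧ z.1.Nonempty ∧ z.2.Nonempty ∧ z ≠ q := by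
  simp only [DS, mem_filter, Finset.mem_product, mem_powerset]
  exact ⟨fun ⟨⟨h1, h2⟩, h⟩ => ⟨⟨h1, h2⟩, h⟩, fun ⟨⟨h1, h2⟩, h⟩ => ⟨⟨h1, h2⟩, h⟩⟩

lemma neg_one_sq_pow (k : ℕ) : (-1 : ℤ) ^ k * (-1 : ℤ) ^ k = 1 := by
  rw [← mul_pow]; norm_num

lemma fC_OI_aux : ∀ n : ℕ, ∀ p q : P2, (OI p q).card < n → plt p q →
    fC (OI p q) = (-1 : ℤ) ^ (N p + N q + 1) := by
  intro n
  induction n with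
  | zero => intro p q h; omega
  | succ n ih =>
    intro p q hcard hpq
    have hOIflt : ∀ z ∈ OI p q, (OI p q).filter (fun x => plt x z) = OI p z := by
      intro z hz
      rw [mem_OI] at hz
      ext w
      rw [mem_filter, mem_OI, mem_OI]
      constructor
      · rintro ⟨⟨hwq, hpw, hwp, hwq'⟩, hwz⟩
        exact ⟨hwz.1, hpw, hwp, hwz.2⟩
      · rintro ⟨hwz, hpw, hwp, hwz'⟩
        have hwq : ple w q := ple_trans hwz hz.1
        refine ⟨⟨hwq, hpw, hwp, ?_⟩, hwz, hwz'⟩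
        rintro rfl
        exact hz.2.2.2 (ple_antisymm hz.1 hwz)
    have hsub : ∀ z ∈ OI p q, OI p z ⊂ OI p q := by
      intro z hz
      rw [← hOIflt z hz]
      refine Finset.ssubset_iff_of_subset (Finset.filter_subset _ _) |>.2 ?_
      refine ⟨z, hz, ?_⟩
      rw [mem_filter]
      rintro ⟨_, _, h⟩
      exact h rfl
    rw [fC_rec]
    have hih : ∀ z ∈ OI p q, fC ((OI p q).filter (fun x => plt x z))
        = (-1 : ℤ) ^ (N p + N z + 1) := by
      intro z hz
      rw [hOIflt z hz]
      apply ih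
      · have := Finset.card_lt_card (hsub z hz); omega
      · have hz' := mem_OI.1 hz
        exact ⟨hz'.2.1, Ne.symm hz'.2.2.1⟩
    rw [Finset.sum_congr rfl hih]
    -- now evaluate ∑ z ∈ OI p q, (-1)^(N p + N z + 1)
    have hFsum : ∑ z ∈ OI p q, (-1 : ℤ) ^ N z = -(-1 : ℤ) ^ N p - (-1 : ℤ) ^ N q := by
      have hF := sum_pair_interval hpq.1
      rw [if_neg hpq.2] at hF
      have hdecomp : (q.1.powerset ×ˢ q.2.powerset).filter (fun z => ple p z)
          = insert p (insert q (OI p q)) := by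
        ext z
        simp only [mem_filter, Finset.mem_product, mem_powerset, Finset.mem_insert, mem_OI]
        constructor
        · rintro ⟨⟨h1, h2⟩, h3⟩
          by_cases hzp : z = p
          · exact Or.inl hzp
          by_cases hzq : z = q
          · exact Or.inr (Or.inl hzq)
          · exact Or.inr (Or.inr ⟨⟨h1, h2⟩, h3, hzp, hzq⟩)
        · rintro (rfl | rfl | ⟨hzq, h3, _, _⟩)
          · exact ⟨⟨hpq.1.1, hpq.1.2⟩, ple_refl _⟩
          · exact ⟨⟨subset_rfl, subset_rfl⟩, hpq.1⟩
          · exact ⟨⟨hzq.1, hzq.2⟩, h3⟩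
      rw [hdecomp, Finset.sum_insert, Finset.sum_insert] at hF
      · linarith
      · rw [mem_OI]; rintro ⟨_, _, _, h⟩; exact h rfl
      · simp only [Finset.mem_insert, mem_OI]
        rintro (h | ⟨_, _, h, _⟩)
        · exact hpq.2 h
        · exact h rfl
    have expand : ∀ z : P2, (-1 : ℤ) ^ (N p + N z + 1) = -((-1 : ℤ) ^ N p * (-1 : ℤ) ^ N z) := by
      intro z; rw [pow_add, pow_add]; ring
    rw [Finset.sum_congr rfl (fun z _ => expand z), Finset.sum_neg_distrib,
      ← Finset.mul_sum, hFsum]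
    have h1 := neg_one_sq_pow (N p)
    rw [pow_add, pow_add]
    ring_nf
    ring_nf at h1
    nlinarith [h1]

lemma fC_OI {p q : P2} (h : plt p q) : fC (OI p q) = (-1 : ℤ) ^ (N p + N q + 1) :=
  fC_OI_aux ((OI p q).card + 1) p q (Nat.lt_succ_self _) h

lemma fC_DS_aux : ∀ n : ℕ, ∀ q : P2, (DS q).card < n → q.1.Nonempty → q.2.Nonempty →
    fC (DS q) = (-1 : ℤ) ^ N q := by
  intro n
  induction n with
  | zero => intro q h; omega
  | succ n ih =>
    intro q hcard h1 h2
    have hflt : ∀ z ∈ DS q, (DS q).filter (fun x => plt x z) = DS z := by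
      intro z hz
      rw [mem_DS] at hz
      ext w
      rw [mem_filter, mem_DS, mem_DS]
      constructor
      · rintro ⟨⟨hwq, hw1, hw2, hwq'⟩, hwz⟩
        exact ⟨hwz.1, hw1, hw2, hwz.2⟩
      · rintro ⟨hwz, hw1, hw2, hwz'⟩
        refine ⟨⟨ple_trans hwz hz.1, hw1, hw2, ?_⟩, hwz, hwz'⟩
        rintro rfl
        exact hz.2.2.2 (ple_antisymm hz.1 hwz)
    have hsub : ∀ z ∈ DS q, DS z ⊂ DS q := by
      intro z hz
      rw [← hflt z hz]
      refine Finset.ssubset_iff_of_subset (Finset.filter_subset _ _) |>.2 ?_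
      refine ⟨z, hz, ?_⟩
      rw [mem_filter]
      rintro ⟨_, _, h⟩
      exact h rfl
    rw [fC_rec]
    have hih : ∀ z ∈ DS q, fC ((DS q).filter (fun x => plt x z)) = (-1 : ℤ) ^ N z := by
      intro z hz
      rw [hflt z hz]
      have hz' := mem_DS.1 hz
      apply ih
      · have := Finset.card_lt_card (hsub z hz); omega
      · exact hz'.2.1
      · exact hz'.2.2.1
    rw [Finset.sum_congr rfl hih]
    have hFsum : ∑ z ∈ DS q, (-1 : ℤ) ^ N z = 1 - (-1 : ℤ) ^ N q := by
      have hF := sum_pair_nonempty h1 h2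
      have hdecomp : (q.1.powerset ×ˢ q.2.powerset).filter (fun z => z.1.Nonempty ∧ z.2.Nonempty)
          = insert q (DS q) := by
        ext z
        simp only [mem_filter, Finset.mem_product, mem_powerset, Finset.mem_insert, mem_DS]
        constructor
        · rintro ⟨⟨hz1, hz2⟩, h3, h4⟩
          by_cases hzq : z = q
          · exact Or.inl hzq
          · exact Or.inr ⟨⟨hz1, hz2⟩, h3, h4, hzq⟩
        · rintro (rfl | ⟨hzq, h3, h4, _⟩)
          · exact ⟨⟨subset_rfl, subset_rfl⟩, h1, h2⟩
          · exact ⟨⟨hzq.1, hzq.2⟩, h3, h4⟩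
      rw [hdecomp, Finset.sum_insert] at hF
      · linarith
      · rw [mem_DS]; rintro ⟨_, _, _, h⟩; exact h rfl
    rw [hFsum]
    ring

lemma fC_DS {q : P2} (h1 : q.1.Nonempty) (h2 : q.2.Nonempty) :
    fC (DS q) = (-1 : ℤ) ^ N q :=
  fC_DS_aux ((DS q).card + 1) q (Nat.lt_succ_self _) h1 h2

def uS (A : Finset (Finset ℕ)) (a : Finset ℕ) : ℤ :=
  ∑ x ∈ A.filter (fun x => a ⊆ x), (-1 : ℤ) ^ (x.card + a.card)

def US (G H : Finset (Finset ℕ)) (q : P2) : Finset P2 :=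
  (G ×ˢ H).filter (fun z => ple q z ∧ z ≠ q)

lemma mem_US {G H : Finset (Finset ℕ)} {q z : P2} :
    z ∈ US G H q ↔ z.1 ∈ G ∧ z.2 ∈ H ∧ ple q z ∧ z ≠ q := by
  simp only [US, mem_filter, Finset.mem_product]
  tauto

lemma complex_closed {G : Finset (Finset ℕ)} (hG : IsComplex G) {x a : Finset ℕ}
    (hx : x ∈ G) (hax : a ⊆ x) (ha : a.Nonempty) : a ∈ G := hG.2 x hx a hax ha

lemma fC_US {G H : Finset (Finset ℕ)} (hG : IsComplex G) (hH : IsComplex H) {q : P2}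
    (hq1 : q.1 ∈ G) (hq2 : q.2 ∈ H) :
    fC (US G H q) = uS G q.1 * uS H q.2 := by
  have hq1ne : q.1.Nonempty := hG.1 q.1 hq1
  have hq2ne : q.2.Nonempty := hH.1 q.2 hq2
  have hflt : ∀ z ∈ US G H q, (US G H q).filter (fun x => plt x z) = OI q z := by
    intro z hz
    rw [mem_US] at hz
    ext w
    rw [mem_filter, mem_US, mem_OI]
    constructor
    · rintro ⟨⟨hw1, hw2, hqw, hwq⟩, hwz⟩
      exact ⟨hwz.1, hqw, hwq, hwz.2⟩
    · rintro ⟨hwz, hqw, hwq, hwz'⟩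
      refine ⟨⟨?_, ?_, hqw, hwq⟩, hwz, hwz'⟩
      · exact complex_closed hG hz.1 hwz.1 (hq1ne.mono hqw.1)
      · exact complex_closed hH hz.2.1 hwz.2 (hq2ne.mono hqw.2)
  rw [fC_rec]
  have hih : ∀ z ∈ US G H q, fC ((US G H q).filter (fun x => plt x z))
      = (-1 : ℤ) ^ (N q + N z + 1) := by
    intro z hz
    rw [hflt z hz]
    have hz' := mem_US.1 hz
    exact fC_OI ⟨hz'.2.2.1, Ne.symm hz'.2.2.2⟩
  rw [Finset.sum_congr rfl hih]
  have hprod : ∑ z ∈ (G ×ˢ H).filter (fun z => ple q z), (-1 : ℤ) ^ (N q + N z)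
      = uS G q.1 * uS H q.2 := by
    have hfp : (G ×ˢ H).filter (fun z => ple q z)
        = (G.filter (fun s => q.1 ⊆ s)) ×ˢ (H.filter (fun s => q.2 ⊆ s)) := by
      rw [← Finset.filter_product]
      rfl
    rw [hfp, uS, uS, Finset.sum_mul_sum, ← Finset.sum_product']
    apply Finset.sum_congr rfl
    intro z _
    rw [← pow_add]
    exact congrArg (fun k => (-1:ℤ)^k) (by simp only [N_def]; omega)
  have hdecomp : (G ×ˢ H).filter (fun z => ple q z) = insert q (US G H q) := by
    ext z
    simp only [mem_filter, Finset.mem_product, Finset.mem_insert, mem_US]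
    constructor
    · rintro ⟨⟨h1, h2⟩, h3⟩
      by_cases hzq : z = q
      · exact Or.inl hzq
      · exact Or.inr ⟨h1, h2, h3, hzq⟩
    · rintro (rfl | ⟨h1, h2, h3, _⟩)
      · exact ⟨⟨hq1, hq2⟩, ple_refl _⟩
      · exact ⟨⟨h1, h2⟩, h3⟩
  rw [hdecomp, Finset.sum_insert] at hprod
  swap
  · rw [mem_US]; rintro ⟨_, _, _, h⟩; exact h rfl
  have expand : ∀ z : P2, (-1 : ℤ) ^ (N q + N z + 1) = -(-1 : ℤ) ^ (N q + N z) := by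
    intro z; rw [pow_succ]; ring
  rw [Finset.sum_congr rfl (fun z _ => expand z), Finset.sum_neg_distrib]
  have : (-1 : ℤ) ^ (N q + N q) = 1 := by
    rw [pow_add]; exact neg_one_sq_pow (N q)
  rw [this] at hprod
  linarith

lemma neg_one_pow_congr {a b : ℕ} (h : a % 2 = b % 2) : (-1 : ℤ) ^ a = (-1 : ℤ) ^ b := by
  rcases Nat.even_or_odd a with ha | ha
  · have hb : Even b := by rw [Nat.even_iff] at ha ⊢; omega
    rw [ha.neg_one_pow, hb.neg_one_pow]
  · have hb : Odd b := by rw [Nat.odd_iff] at ha ⊢; omega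
    rw [ha.neg_one_pow, hb.neg_one_pow]

def Mset (G H : Finset (Finset ℕ)) (q qm : P2) (c : Finset P2) : Finset P2 :=
  (G ×ˢ H).filter (fun x => plt q x ∧ plt x qm ∧ x ∉ c ∧ ∀ y ∈ c, pcmp x y)

lemma mem_Mset {G H : Finset (Finset ℕ)} {q qm x : P2} {c : Finset P2} :
    x ∈ Mset G H q qm c ↔ x.1 ∈ G ∧ x.2 ∈ H ∧ plt q x ∧ plt x qm ∧ x ∉ c ∧ ∀ y ∈ c, pcmp x y := by
  simp only [Mset, mem_filter, Finset.mem_product]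
  tauto

def Lset (G H : Finset (Finset ℕ)) (qm : P2) (c : Finset P2) : Finset P2 :=
  (G ×ˢ H).filter (fun x => x ∉ c ∧ plt x qm ∧ ∀ y ∈ c, pcmp x y)

lemma mem_Lset {G H : Finset (Finset ℕ)} {qm x : P2} {c : Finset P2} :
    x ∈ Lset G H qm c ↔ x.1 ∈ G ∧ x.2 ∈ H ∧ x ∉ c ∧ plt x qm ∧ ∀ y ∈ c, pcmp x y := by
  simp only [Lset, mem_filter, Finset.mem_product]
  tauto

lemma fC_Mset {G H : Finset (Finset ℕ)} (hG : IsComplex G) (hH : IsComplex H) :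
    ∀ n : ℕ, ∀ (c : Finset P2) (q qm : P2), c.card < n →
    c ⊆ G ×ˢ H → chainF c → qm ∈ c → (∀ y ∈ c, ple y qm) →
    q.1.Nonempty → q.2.Nonempty → (∀ y ∈ c, plt q y) →
    fC (Mset G H q qm c) = (-1 : ℤ) ^ (N qm + N q + c.card) := by
  intro n
  induction n with
  | zero => intro c q qm h; omega
  | succ n ih =>
    intro c q qm hcard hcsub hchain hqm hmax hq1 hq2 hql
    have hcne : c.Nonempty := ⟨qm, hqm⟩
    obtain ⟨q0, hq0c, hmin⟩ := chain_exists_min hchain hcne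
    have hq0GH : q0.1 ∈ G ∧ q0.2 ∈ H := by
      have := hcsub hq0c
      rw [Finset.mem_product] at this
      exact this
    have hplt_q_q0 : plt q q0 := hql q0 hq0c
    by_cases hc' : c.erase q0 = ∅
    · -- c = {q0}, qm = q0
      have hceq : c = {q0} := by
        ext y
        rw [Finset.mem_singleton]
        constructor
        · intro hy
          by_contra hne
          exact (Finset.notMem_empty y) (hc' ▸ Finset.mem_erase.2 ⟨hne, hy⟩)
        · rintro rfl; exact hq0c
      have hqmq0 : qm = q0 := by
        have := hqm; rw [hceq, Finset.mem_singleton] at this; exact this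
      subst hqmq0
      have hset : Mset G H q qm c = OI q qm := by
        ext x
        rw [mem_Mset, mem_OI, hceq]
        constructor
        · rintro ⟨_, _, hqx, hxqm, _, _⟩
          exact ⟨hxqm.1, hqx.1, Ne.symm hqx.2, hxqm.2⟩
        · rintro ⟨hxqm, hqx, hxq, hxqm'⟩
          refine ⟨?_, ?_, ⟨hqx, Ne.symm hxq⟩, ⟨hxqm, hxqm'⟩, ?_, ?_⟩
          · exact complex_closed hG hq0GH.1 hxqm.1 (hq1.mono hqx.1)
          · exact complex_closed hH hq0GH.2 hxqm.2 (hq2.mono hqx.2)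
          · rw [Finset.mem_singleton]; exact hxqm'
          · intro y hy
            rw [Finset.mem_singleton] at hy
            subst hy
            exact Or.inl hxqm
      rw [hset, fC_OI hplt_q_q0, hceq, Finset.card_singleton]
      apply neg_one_pow_congr
      omega
    · -- inductive case
      have hc'ne : (c.erase q0).Nonempty := Finset.nonempty_iff_ne_empty.2 hc'
      set c' := c.erase q0 with hc'def
      have hc'sub : c' ⊆ G ×ˢ H := (Finset.erase_subset _ _).trans hcsub
      have hc'chain : chainF c' := chainF_subset (Finset.erase_subset _ _) hchain
      have hqmne : qm ≠ q0 := by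
        rintro rfl
        obtain ⟨y, hy⟩ := hc'ne
        rw [Finset.mem_erase] at hy
        exact hy.1 (ple_antisymm (hmax y hy.2) (hmin y hy.2))
      have hqmc' : qm ∈ c' := Finset.mem_erase.2 ⟨hqmne, hqm⟩
      have hmax' : ∀ y ∈ c', ple y qm := fun y hy => hmax y (Finset.mem_of_mem_erase hy)
      have hq0lt : ∀ y ∈ c', plt q0 y := by
        intro y hy
        rw [Finset.mem_erase] at hy
        exact ⟨hmin y hy.2, Ne.symm hy.1⟩
      have hq01 : q0.1.Nonempty := hG.1 _ hq0GH.1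
      have hq02 : q0.2.Nonempty := hH.1 _ hq0GH.2
      have hsplit : Mset G H q qm c = OI q q0 ∪ Mset G H q0 qm c' := by
        ext x
        rw [Finset.mem_union, mem_Mset, mem_OI, mem_Mset]
        constructor
        · rintro ⟨hx1, hx2, hqx, hxqm, hxc, hcmp⟩
          have hxq0 : x ≠ q0 := fun h => hxc (h ▸ hq0c)
          rcases hcmp q0 hq0c with h | h
          · exact Or.inl ⟨h, hqx.1, Ne.symm hqx.2, hxq0⟩
          · refine Or.inr ⟨hx1, hx2, ⟨h, Ne.symm hxq0⟩, hxqm, ?_, ?_⟩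
            · intro hx; exact hxc (Finset.mem_of_mem_erase hx)
            · intro y hy; exact hcmp y (Finset.mem_of_mem_erase hy)
        · rintro (⟨hxq0, hqx, hxq, hxq0'⟩ | ⟨hx1, hx2, hq0x, hxqm, hxc', hcmp⟩)
          · -- x ∈ OI q q0
            have hx1G : x.1 ∈ G := complex_closed hG hq0GH.1 hxq0.1 (hq1.mono hqx.1)
            have hx2H : x.2 ∈ H := complex_closed hH hq0GH.2 hxq0.2 (hq2.mono hqx.2)
            have hxltq0 : plt x q0 := ⟨hxq0, hxq0'⟩
            refine ⟨hx1G, hx2H, ⟨hqx, Ne.symm hxq⟩, ?_, ?_, ?_⟩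
            · exact plt_trans_left hxltq0 (hmax q0 hq0c)
            · intro hx
              have := hmin x hx
              exact hxq0' (ple_antisymm hxq0 this)
            · intro y hy
              exact Or.inl (ple_trans hxq0 (hmin y hy))
          · -- x ∈ Mset q0 qm c'
            refine ⟨hx1, hx2, plt_trans_right hplt_q_q0.1 hq0x, hxqm, ?_, ?_⟩
            · intro hx
              rcases Finset.mem_insert.1 ((Finset.insert_erase hq0c) ▸ hx : x ∈ insert q0 c') with h | h
              · exact hq0x.2 h.symm
              · exact hxc' h
            · intro y hy
              rcases Finset.mem_insert.1 ((Finset.insert_erase hq0c) ▸ hy : y ∈ insert q0 c') with h | h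
              · subst h; exact Or.inr hq0x.1
              · exact hcmp y h
      have hdisj : Disjoint (OI q q0) (Mset G H q0 qm c') := by
        rw [Finset.disjoint_left]
        intro x hx hx'
        rw [mem_OI] at hx
        rw [mem_Mset] at hx'
        exact hx.2.2.2 (ple_antisymm hx.1 hx'.2.2.1.1)
      have hcross : ∀ x ∈ OI q q0, ∀ y ∈ Mset G H q0 qm c', plt x y := by
        intro x hx y hy
        rw [mem_OI] at hx
        rw [mem_Mset] at hy
        exact plt_trans_right hx.1 hy.2.2.1
      rw [hsplit, fC_ordinal_sum hdisj hcross, fC_OI hplt_q_q0,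
        ih c' q0 qm (by
          have he := Finset.card_erase_of_mem hq0c
          have h1 : 1 ≤ c.card := Finset.card_pos.2 hcne
          rw [hc'def]
          omega)
          hc'sub hc'chain hqmc' hmax' hq01 hq02 hq0lt,
        ← pow_add]
      apply neg_one_pow_congr
      rw [hc'def, Finset.card_erase_of_mem hq0c]
      have : 1 ≤ c.card := Finset.card_pos.2 hcne
      omega

lemma fC_Lset {G H : Finset (Finset ℕ)} (hG : IsComplex G) (hH : IsComplex H)
    (c : Finset P2) (qm : P2)
    (hcsub : c ⊆ G ×ˢ H) (hchain : chainF c) (hqm : qm ∈ c) (hmax : ∀ y ∈ c, ple y qm) :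
    fC (Lset G H qm c) = (-1 : ℤ) ^ (N qm + c.card + 1) := by
  have hcne : c.Nonempty := ⟨qm, hqm⟩
  obtain ⟨q0, hq0c, hmin⟩ := chain_exists_min hchain hcne
  have hq0GH : q0.1 ∈ G ∧ q0.2 ∈ H := by
    have := hcsub hq0c
    rw [Finset.mem_product] at this
    exact this
  have hq01 : q0.1.Nonempty := hG.1 _ hq0GH.1
  have hq02 : q0.2.Nonempty := hH.1 _ hq0GH.2
  by_cases hc' : c.erase q0 = ∅
  · -- c = {q0} and qm = q0
    have hceq : c = {q0} := by
      ext y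
      rw [Finset.mem_singleton]
      constructor
      · intro hy
        by_contra hne
        exact (Finset.notMem_empty y) (hc' ▸ Finset.mem_erase.2 ⟨hne, hy⟩)
      · rintro rfl; exact hq0c
    have hqmq0 : qm = q0 := by
      have := hqm; rw [hceq, Finset.mem_singleton] at this; exact this
    subst hqmq0
    have hset : Lset G H qm c = DS qm := by
      ext x
      rw [mem_Lset, mem_DS, hceq]
      constructor
      · rintro ⟨hx1, hx2, hxc, hxqm, _⟩
        exact ⟨hxqm.1, hG.1 _ hx1, hH.1 _ hx2, hxqm.2⟩
      · rintro ⟨hxqm, hx1, hx2, hxqm'⟩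
        refine ⟨?_, ?_, ?_, ⟨hxqm, hxqm'⟩, ?_⟩
        · exact complex_closed hG hq0GH.1 hxqm.1 hx1
        · exact complex_closed hH hq0GH.2 hxqm.2 hx2
        · rw [Finset.mem_singleton]; exact hxqm'
        · intro y hy
          rw [Finset.mem_singleton] at hy
          subst hy
          exact Or.inl hxqm
    rw [hset, fC_DS hq01 hq02, hceq, Finset.card_singleton]
    apply neg_one_pow_congr
    omega
  · have hc'ne : (c.erase q0).Nonempty := Finset.nonempty_iff_ne_empty.2 hc'
    set c' := c.erase q0 with hc'def
    have hc'sub : c' ⊆ G ×ˢ H := (Finset.erase_subset _ _).trans hcsub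
    have hc'chain : chainF c' := chainF_subset (Finset.erase_subset _ _) hchain
    have hqmne : qm ≠ q0 := by
      rintro rfl
      obtain ⟨y, hy⟩ := hc'ne
      rw [Finset.mem_erase] at hy
      exact hy.1 (ple_antisymm (hmax y hy.2) (hmin y hy.2))
    have hqmc' : qm ∈ c' := Finset.mem_erase.2 ⟨hqmne, hqm⟩
    have hmax' : ∀ y ∈ c', ple y qm := fun y hy => hmax y (Finset.mem_of_mem_erase hy)
    have hq0lt : ∀ y ∈ c', plt q0 y := by
      intro y hy
      rw [Finset.mem_erase] at hy
      exact ⟨hmin y hy.2, Ne.symm hy.1⟩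
    have hsplit : Lset G H qm c = DS q0 ∪ Mset G H q0 qm c' := by
      ext x
      rw [Finset.mem_union, mem_Lset, mem_DS, mem_Mset]
      constructor
      · rintro ⟨hx1, hx2, hxc, hxqm, hcmp⟩
        have hxq0 : x ≠ q0 := fun h => hxc (h ▸ hq0c)
        rcases hcmp q0 hq0c with h | h
        · exact Or.inl ⟨h, hG.1 _ hx1, hH.1 _ hx2, hxq0⟩
        · refine Or.inr ⟨hx1, hx2, ⟨h, Ne.symm hxq0⟩, hxqm, ?_, ?_⟩
          · intro hx; exact hxc (Finset.mem_of_mem_erase hx)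
          · intro y hy; exact hcmp y (Finset.mem_of_mem_erase hy)
      · rintro (⟨hxq0, hx1ne, hx2ne, hxq0'⟩ | ⟨hx1, hx2, hq0x, hxqm, hxc', hcmp⟩)
        · have hx1G : x.1 ∈ G := complex_closed hG hq0GH.1 hxq0.1 hx1ne
          have hx2H : x.2 ∈ H := complex_closed hH hq0GH.2 hxq0.2 hx2ne
          have hxltq0 : plt x q0 := ⟨hxq0, hxq0'⟩
          refine ⟨hx1G, hx2H, ?_, plt_trans_left hxltq0 (hmax q0 hq0c), ?_⟩
          · intro hx
            exact hxq0' (ple_antisymm hxq0 (hmin x hx))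
          · intro y hy
            exact Or.inl (ple_trans hxq0 (hmin y hy))
        · refine ⟨hx1, hx2, ?_, hxqm, ?_⟩
          · intro hx
            rcases Finset.mem_insert.1 ((Finset.insert_erase hq0c) ▸ hx : x ∈ insert q0 c') with h | h
            · exact hq0x.2 h.symm
            · exact hxc' h
          · intro y hy
            rcases Finset.mem_insert.1 ((Finset.insert_erase hq0c) ▸ hy : y ∈ insert q0 c') with h | h
            · subst h; exact Or.inr hq0x.1
            · exact hcmp y h
    have hdisj : Disjoint (DS q0) (Mset G H q0 qm c') := by
      rw [Finset.disjoint_left]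
      intro x hx hx'
      rw [mem_DS] at hx
      rw [mem_Mset] at hx'
      exact hx.2.2.2 (ple_antisymm hx.1 hx'.2.2.1.1)
    have hcross : ∀ x ∈ DS q0, ∀ y ∈ Mset G H q0 qm c', plt x y := by
      intro x hx y hy
      rw [mem_DS] at hx
      rw [mem_Mset] at hy
      exact plt_trans_right hx.1 hy.2.2.1
    rw [hsplit, fC_ordinal_sum hdisj hcross, fC_DS hq01 hq02,
      fC_Mset hG hH (c'.card + 1) c' q0 qm (Nat.lt_succ_self _)
        hc'sub hc'chain hqmc' hmax' hq01 hq02 hq0lt,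
      ← pow_add]
    apply neg_one_pow_congr
    have he := Finset.card_erase_of_mem hq0c
    have h1 : 1 ≤ c.card := Finset.card_pos.2 hcne
    rw [hc'def]
    omega

section Generic

def gS (A : Finset (Finset α)) (T : Finset α) : ℤ :=
  ∑ x ∈ A.filter (fun x => T ⊆ x), (-1 : ℤ) ^ (x.card + 1)

lemma sum_nonempty_sign_gen {a : Finset α} (ha : a.Nonempty) :
    ∑ s ∈ a.powerset.filter (fun s => s.Nonempty), (-1 : ℤ) ^ s.card = -1 := by
  have h0 := Finset.sum_powerset_neg_one_pow_card (x := a)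
  rw [if_neg (Finset.nonempty_iff_ne_empty.1 ha)] at h0
  rw [← Finset.sum_filter_add_sum_filter_not a.powerset (fun s => s.Nonempty)
    (fun s => (-1 : ℤ) ^ s.card)] at h0
  have h1 : a.powerset.filter (fun s => ¬ s.Nonempty) = {∅} := by
    ext s
    simp only [mem_filter, mem_powerset, mem_singleton, Finset.not_nonempty_iff_eq_empty]
    constructor
    · rintro ⟨_, h⟩; exact h
    · rintro rfl; exact ⟨empty_subset _, rfl⟩
  rw [h1, Finset.sum_singleton, Finset.card_empty, pow_zero] at h0
  linarith

lemma wm_formula {A : Finset (Finset α)} (hA : IsComplex A) {m : ℕ} (hm : 1 ≤ m) :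
    wm m A = ∑ T ∈ A, (-1 : ℤ) ^ (T.card + 1) * (gS A T) ^ m := by
  classical
  set V := A.sup id with hV
  have hAV : ∀ x ∈ A, x ⊆ V := fun x hx => Finset.le_sup (f := id) hx
  have j0 : Fin m := ⟨0, hm⟩
  -- step 1 : rewrite each summand using inclusion-exclusion over T
  have step1 : ∀ X ∈ Fintype.piFinset (fun _ : Fin m => A),
      (if interTuple X ∈ A then ∏ j, (-1 : ℤ) ^ ((X j).card - 1) else 0)
      = ∑ T ∈ V.powerset, (if T.Nonempty ∧ T ⊆ interTuple X
          then (-1 : ℤ) ^ (T.card + 1) * ∏ j, (-1 : ℤ) ^ ((X j).card - 1) else 0) := by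
    intro X hX
    have hXj : ∀ j, X j ∈ A := Fintype.mem_piFinset.1 hX
    have hIT : interTuple X ⊆ X j0 := fun v hv => (Finset.mem_filter.1 hv).2 j0
    have hITV : interTuple X ⊆ V := hIT.trans (hAV _ (hXj j0))
    have hiff : interTuple X ∈ A ↔ (interTuple X).Nonempty :=
      ⟨fun h => hA.1 _ h, fun h => hA.2 (X j0) (hXj j0) _ hIT h⟩
    have hrhs : ∑ T ∈ V.powerset, (if T.Nonempty ∧ T ⊆ interTuple X
          then (-1 : ℤ) ^ (T.card + 1) * ∏ j, (-1 : ℤ) ^ ((X j).card - 1) else 0)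
        = (∑ T ∈ (interTuple X).powerset.filter (fun T => T.Nonempty),
            (-1 : ℤ) ^ (T.card + 1)) * ∏ j, (-1 : ℤ) ^ ((X j).card - 1) := by
      rw [← Finset.sum_filter, Finset.sum_mul]
      apply Finset.sum_congr
      · ext T
        simp only [mem_filter, mem_powerset]
        constructor
        · rintro ⟨_, h1, h2⟩; exact ⟨h2, h1⟩
        · rintro ⟨h1, h2⟩; exact ⟨h1.trans hITV, h2, h1⟩
      · intros; rfl
    rw [hrhs]
    by_cases hne : (interTuple X).Nonempty
    · rw [if_pos (hiff.2 hne)]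
      have : ∑ T ∈ (interTuple X).powerset.filter (fun T => T.Nonempty),
          (-1 : ℤ) ^ (T.card + 1) = 1 := by
        have h := sum_nonempty_sign_gen hne
        have : ∑ T ∈ (interTuple X).powerset.filter (fun T => T.Nonempty),
            (-1 : ℤ) ^ (T.card + 1)
            = - ∑ T ∈ (interTuple X).powerset.filter (fun T => T.Nonempty),
              (-1 : ℤ) ^ T.card := by
          rw [← Finset.sum_neg_distrib]
          apply Finset.sum_congr rfl
          intro T _
          rw [pow_succ]
          ring
        rw [this, h]
        norm_num
      rw [this, one_mul]
    · rw [if_neg (fun h => hne (hiff.1 h))]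
      have : (interTuple X).powerset.filter (fun T => T.Nonempty) = ∅ := by
        rw [Finset.not_nonempty_iff_eq_empty] at hne
        rw [hne]
        ext T
        simp only [mem_filter, mem_powerset, Finset.notMem_empty, iff_false, not_and,
          Finset.subset_empty]
        intro h hT
        subst h
        exact Finset.not_nonempty_empty hT
      rw [this, Finset.sum_empty, zero_mul]
  rw [wm, Finset.sum_congr rfl step1, Finset.sum_comm]
  -- step 2 : evaluate the inner sum for each T
  have step2 : ∀ T ∈ V.powerset,
      ∑ X ∈ Fintype.piFinset (fun _ : Fin m => A),
        (if T.Nonempty ∧ T ⊆ interTuple X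
          then (-1 : ℤ) ^ (T.card + 1) * ∏ j, (-1 : ℤ) ^ ((X j).card - 1) else 0)
      = if T ∈ A then (-1 : ℤ) ^ (T.card + 1) * (gS A T) ^ m else 0 := by
    intro T _
    by_cases hTA : T ∈ A
    · rw [if_pos hTA]
      have hTne : T.Nonempty := hA.1 _ hTA
      have key : ∀ X ∈ Fintype.piFinset (fun _ : Fin m => A),
          (if T.Nonempty ∧ T ⊆ interTuple X
            then (-1 : ℤ) ^ (T.card + 1) * ∏ j, (-1 : ℤ) ^ ((X j).card - 1) else 0)
          = (if ∀ j, T ⊆ X j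
            then (-1 : ℤ) ^ (T.card + 1) * ∏ j, (-1 : ℤ) ^ ((X j).card - 1) else 0) := by
        intro X hX
        have hXj : ∀ j, X j ∈ A := Fintype.mem_piFinset.1 hX
        congr 1
        apply propext
        constructor
        · rintro ⟨_, h⟩ j
          exact h.trans (fun v hv => (Finset.mem_filter.1 hv).2 j)
        · intro h
          refine ⟨hTne, fun v hv => Finset.mem_filter.2 ⟨?_, fun j => h j hv⟩⟩
          exact Finset.mem_of_subset (Finset.le_sup (f := X) (Finset.mem_univ j0)) (h j0 hv)
      rw [Finset.sum_congr rfl key]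
      have hsubset : Fintype.piFinset (fun _ : Fin m => A.filter (fun x => T ⊆ x))
          ⊆ Fintype.piFinset (fun _ : Fin m => A) :=
        Fintype.piFinset_subset _ _ (fun _ => Finset.filter_subset _ _)
      rw [← Finset.sum_subset hsubset]
      · have : ∀ X ∈ Fintype.piFinset (fun _ : Fin m => A.filter (fun x => T ⊆ x)),
            (if ∀ j, T ⊆ X j
              then (-1 : ℤ) ^ (T.card + 1) * ∏ j, (-1 : ℤ) ^ ((X j).card - 1) else 0)
            = (-1 : ℤ) ^ (T.card + 1) * ∏ j, (-1 : ℤ) ^ ((X j).card + 1) := by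
          intro X hX
          have hXj : ∀ j, X j ∈ A.filter (fun x => T ⊆ x) := Fintype.mem_piFinset.1 hX
          rw [if_pos (fun j => (Finset.mem_filter.1 (hXj j)).2)]
          congr 1
          apply Finset.prod_congr rfl
          intro j _
          apply neg_one_pow_congr
          have : (X j).Nonempty := hA.1 _ (Finset.mem_of_mem_filter _ (hXj j))
          have := Finset.card_pos.2 this
          omega
        rw [Finset.sum_congr rfl this, ← Finset.mul_sum]
        congr 1
        rw [← Finset.prod_univ_sum (fun _ : Fin m => A.filter (fun x => T ⊆ x))
          (fun _ x => (-1 : ℤ) ^ (x.card + 1))]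
        rw [Finset.prod_const]
        rw [gS, Finset.card_univ, Fintype.card_fin]
      · intro X hX hX'
        rw [if_neg]
        intro hall
        apply hX'
        rw [Fintype.mem_piFinset]
        intro j
        exact Finset.mem_filter.2 ⟨Fintype.mem_piFinset.1 hX j, hall j⟩
    · rw [if_neg hTA]
      apply Finset.sum_eq_zero
      intro X hX
      rw [if_neg]
      rintro ⟨hTne, hsub⟩
      exact hTA (hA.2 (X j0) (Fintype.mem_piFinset.1 hX j0) T
        (hsub.trans (fun v hv => (Finset.mem_filter.1 hv).2 j0)) hTne)
  rw [Finset.sum_congr rfl step2, Finset.sum_ite_mem]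
  congr 1
  exact Finset.inter_eq_right.2 (fun x hx => Finset.mem_powerset.2 (hAV x hx))

end Generic


lemma mem_prodComplex {G H : Finset (Finset ℕ)} {c : Finset P2} :
    c ∈ prodComplex G H ↔ c ⊆ G ×ˢ H ∧ c.Nonempty ∧ chainF c := by
  simp only [prodComplex, mem_filter, mem_powerset]
  constructor
  · rintro ⟨h1, h2, h3⟩
    exact ⟨h1, h2, fun p hp q hq => h3 p hp q hq⟩
  · rintro ⟨h1, h2, h3⟩
    exact ⟨h1, h2, fun p hp q hq => h3 p hp q hq⟩

lemma prodComplex_isComplex (G H : Finset (Finset ℕ)) : IsComplex (prodComplex G H) := by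
  constructor
  · intro c hc
    exact (mem_prodComplex.1 hc).2.1
  · intro c hc d hdc hdne
    rw [mem_prodComplex] at hc ⊢
    exact ⟨hdc.trans hc.1, hdne, chainF_subset hdc hc.2.2⟩

def Comp (G H : Finset (Finset ℕ)) (c : Finset P2) : Finset P2 :=
  (G ×ˢ H).filter (fun x => x ∉ c ∧ ∀ y ∈ c, pcmp x y)

lemma gS_eq_uS (A : Finset (Finset ℕ)) (a : Finset ℕ) :
    gS A a = (-1 : ℤ) ^ (a.card + 1) * uS A a := by
  rw [gS, uS, Finset.mul_sum]
  apply Finset.sum_congr rfl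
  intro x _
  rw [← pow_add]
  apply neg_one_pow_congr
  omega

lemma gS_prod {G H : Finset (Finset ℕ)} (hG : IsComplex G) (hH : IsComplex H)
    {c : Finset P2} (hc : c ∈ prodComplex G H) :
    gS (prodComplex G H) c = gS G (topOf c).1 * gS H (topOf c).2 := by
  obtain ⟨hcsub, hcne, hchain⟩ := mem_prodComplex.1 hc
  obtain ⟨hqc, hqmax⟩ := topOf_spec hchain hcne
  set q := topOf c with hqdef
  have hqGH : q.1 ∈ G ∧ q.2 ∈ H := by
    have := hcsub hqc
    rw [Finset.mem_product] at this
    exact this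
  have hq1ne : q.1.Nonempty := hG.1 _ hqGH.1
  have hq2ne : q.2.Nonempty := hH.1 _ hqGH.2
  -- (a) gS P c = (-1)^(c.card+1) * fC (Comp G H c)
  have ha : gS (prodComplex G H) c = (-1 : ℤ) ^ (c.card + 1) * fC (Comp G H c) := by
    rw [gS, fC, ← Finset.sum_filter, Finset.mul_sum]
    apply Finset.sum_nbij' (i := fun d => d \ c) (j := fun e => c ∪ e)
    · intro d hd
      rw [mem_filter] at hd
      obtain ⟨hdP, hcd⟩ := hd
      obtain ⟨hdsub, hdne, hdchain⟩ := mem_prodComplex.1 hdP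
      rw [mem_filter, mem_powerset]
      refine ⟨?_, chainF_subset (Finset.sdiff_subset) hdchain⟩
      intro x hx
      rw [Finset.mem_sdiff] at hx
      rw [Comp, mem_filter]
      exact ⟨hdsub hx.1, hx.2, fun y hy => hdchain x hx.1 y (hcd hy)⟩
    · intro e he
      rw [mem_filter, mem_powerset] at he
      obtain ⟨hesub, hechain⟩ := he
      have heC : ∀ x ∈ e, x.1 ∈ G ∧ x.2 ∈ H ∧ x ∉ c ∧ ∀ y ∈ c, pcmp x y := by
        intro x hx
        have := hesub hx
        rw [Comp, mem_filter, Finset.mem_product] at this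
        tauto
      rw [mem_filter, mem_prodComplex]
      refine ⟨⟨?_, hcne.mono Finset.subset_union_left, ?_⟩, Finset.subset_union_left⟩
      · intro x hx
        rcases Finset.mem_union.1 hx with h | h
        · exact hcsub h
        · have := heC x h
          rw [Finset.mem_product]
          exact ⟨this.1, this.2.1⟩
      · intro p hp q' hq'
        rcases Finset.mem_union.1 hp with h1 | h1 <;> rcases Finset.mem_union.1 hq' with h2 | h2
        · exact hchain p h1 q' h2
        · rcases (heC q' h2).2.2.2 p h1 with h | h
          · exact Or.inr h
          · exact Or.inl h
        · exact (heC p h1).2.2.2 q' h2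
        · exact hechain p h1 q' h2
    · intro d hd
      rw [mem_filter] at hd
      exact Finset.union_sdiff_of_subset hd.2
    · intro e he
      rw [mem_filter, mem_powerset] at he
      apply Finset.union_sdiff_cancel_left
      rw [Finset.disjoint_left]
      intro x hx hxe
      have := he.1 hxe
      rw [Comp, mem_filter] at this
      exact this.2.1 hx
    · intro d hd
      rw [mem_filter] at hd
      rw [← pow_add]
      apply neg_one_pow_congr
      have := Finset.card_sdiff_add_card_eq_card hd.2
      omega
  -- (b) split Comp = Lset ∪ US
  have hb : Comp G H c = Lset G H q c ∪ US G H q := by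
    ext x
    rw [Finset.mem_union, mem_Lset, mem_US, Comp, mem_filter, Finset.mem_product]
    constructor
    · rintro ⟨⟨hx1, hx2⟩, hxc, hcmp⟩
      have hxq : x ≠ q := fun h => hxc (h ▸ hqc)
      rcases hcmp q hqc with h | h
      · exact Or.inl ⟨hx1, hx2, hxc, ⟨h, hxq⟩, hcmp⟩
      · exact Or.inr ⟨hx1, hx2, h, hxq⟩
    · rintro (⟨hx1, hx2, hxc, hxq, hcmp⟩ | ⟨hx1, hx2, hqx, hxq⟩)
      · exact ⟨⟨hx1, hx2⟩, hxc, hcmp⟩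
      · refine ⟨⟨hx1, hx2⟩, ?_, ?_⟩
        · intro hx
          exact hxq (ple_antisymm (hqmax x hx) hqx)
        · intro y hy
          exact Or.inr (ple_trans (hqmax y hy) hqx)
  have hdisj : Disjoint (Lset G H q c) (US G H q) := by
    rw [Finset.disjoint_left]
    intro x hx hx'
    rw [mem_Lset] at hx
    rw [mem_US] at hx'
    exact hx.2.2.2.1.2 (ple_antisymm hx.2.2.2.1.1 hx'.2.2.1)
  have hcross : ∀ x ∈ Lset G H q c, ∀ y ∈ US G H q, plt x y := by
    intro x hx y hy
    rw [mem_Lset] at hx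
    rw [mem_US] at hy
    exact plt_trans_left hx.2.2.2.1 hy.2.2.1
  rw [ha, hb, fC_ordinal_sum hdisj hcross,
    fC_Lset hG hH c q hcsub hchain hqc hqmax, fC_US hG hH hqGH.1 hqGH.2,
    gS_eq_uS, gS_eq_uS]
  have : (-1 : ℤ) ^ (c.card + 1) * ((-1 : ℤ) ^ (N q + c.card + 1) * (uS G q.1 * uS H q.2))
      = ((-1 : ℤ) ^ (N q)) * (uS G q.1 * uS H q.2) := by
    rw [← mul_assoc, ← pow_add]
    congr 1
    apply neg_one_pow_congr
    omega
  rw [this]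
  have : (-1 : ℤ) ^ (q.1.card + 1) * uS G q.1 * ((-1 : ℤ) ^ (q.2.card + 1) * uS H q.2)
      = ((-1 : ℤ) ^ (q.1.card + 1) * (-1 : ℤ) ^ (q.2.card + 1)) * (uS G q.1 * uS H q.2) := by
    ring
  rw [this, ← pow_add]
  congr 1
  apply neg_one_pow_congr
  rw [N_def]
  omega

lemma fiber_sum {G H : Finset (Finset ℕ)} (hG : IsComplex G) (hH : IsComplex H)
    {q : P2} (hq : q ∈ G ×ˢ H) :
    ∑ c ∈ (prodComplex G H).filter (fun c => topOf c = q), (-1 : ℤ) ^ (c.card + 1)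
      = (-1 : ℤ) ^ N q := by
  have hqGH := Finset.mem_product.1 hq
  have hq1ne : q.1.Nonempty := hG.1 _ hqGH.1
  have hq2ne : q.2.Nonempty := hH.1 _ hqGH.2
  rw [← fC_DS hq1ne hq2ne, fC, ← Finset.sum_filter]
  apply Finset.sum_nbij' (i := fun c => c.erase q) (j := fun e => insert q e)
  · intro c hc
    rw [mem_filter] at hc
    obtain ⟨hcP, hct⟩ := hc
    obtain ⟨hcsub, hcne, hchain⟩ := mem_prodComplex.1 hcP
    obtain ⟨hqc, hqmax⟩ := topOf_spec hchain hcne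
    rw [hct] at hqc hqmax
    rw [mem_filter, mem_powerset]
    refine ⟨?_, chainF_subset (Finset.erase_subset _ _) hchain⟩
    intro x hx
    rw [Finset.mem_erase] at hx
    have hxGH := Finset.mem_product.1 (hcsub hx.2)
    rw [mem_DS]
    exact ⟨hqmax x hx.2, hG.1 _ hxGH.1, hH.1 _ hxGH.2, hx.1⟩
  · intro e he
    rw [mem_filter, mem_powerset] at he
    obtain ⟨hesub, hechain⟩ := he
    have heD : ∀ x ∈ e, ple x q ∧ x ≠ q := by
      intro x hx
      have := mem_DS.1 (hesub hx)
      exact ⟨this.1, this.2.2.2⟩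
    have hmax : ∀ y ∈ insert q e, ple y q := by
      intro y hy
      rcases Finset.mem_insert.1 hy with rfl | hy
      · exact ple_refl _
      · exact (heD y hy).1
    rw [mem_filter, mem_prodComplex]
    refine ⟨⟨?_, Finset.insert_nonempty _ _, ?_⟩, topOf_eq (Finset.mem_insert_self _ _) hmax⟩
    · intro x hx
      rcases Finset.mem_insert.1 hx with rfl | hx
      · exact hq
      · have := mem_DS.1 (hesub hx)
        rw [Finset.mem_product]
        constructor
        · exact complex_closed hG hqGH.1 this.1.1 this.2.1
        · exact complex_closed hH hqGH.2 this.1.2 this.2.2.1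
    · intro p hp r hr
      by_cases hpq : p = q
      · subst hpq
        exact Or.inr (hmax r hr)
      by_cases hrq : r = q
      · subst hrq
        exact Or.inl (hmax p hp)
      have hp' : p ∈ e := by
        rcases Finset.mem_insert.1 hp with h | h
        · exact absurd h hpq
        · exact h
      have hr' : r ∈ e := by
        rcases Finset.mem_insert.1 hr with h | h
        · exact absurd h hrq
        · exact h
      exact hechain p hp' r hr' 
  · intro c hc
    rw [mem_filter] at hc
    obtain ⟨hcP, hct⟩ := hc
    obtain ⟨hcsub, hcne, hchain⟩ := mem_prodComplex.1 hcP
    obtain ⟨hqc, _⟩ := topOf_spec hchain hcne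
    rw [hct] at hqc
    exact Finset.insert_erase hqc
  · intro e he
    rw [mem_filter, mem_powerset] at he
    apply Finset.erase_insert
    intro hqe
    exact (mem_DS.1 (he.1 hqe)).2.2.2 rfl
  · intro c hc
    rw [mem_filter] at hc
    obtain ⟨hcP, hct⟩ := hc
    obtain ⟨hcsub, hcne, hchain⟩ := mem_prodComplex.1 hcP
    obtain ⟨hqc, _⟩ := topOf_spec hchain hcne
    rw [hct] at hqc
    rw [Finset.card_erase_of_mem hqc]
    apply neg_one_pow_congr
    have : 1 ≤ c.card := Finset.card_pos.2 hcne
    omega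

theorem product_formulaG (G H : Finset (Finset ℕ))
    (hG : IsComplex G) (hH : IsComplex H) (m : ℕ) (hm : 1 ≤ m) :
    wm m (prodComplex G H) = wm m G * wm m H := by
  rw [wm_formula (prodComplex_isComplex G H) hm, wm_formula hG hm, wm_formula hH hm]
  have step1 : ∑ c ∈ prodComplex G H, (-1 : ℤ) ^ (c.card + 1) * (gS (prodComplex G H) c) ^ m
      = ∑ c ∈ prodComplex G H,
          (-1 : ℤ) ^ (c.card + 1) * (gS G (topOf c).1 * gS H (topOf c).2) ^ m := by
    apply Finset.sum_congr rfl
    intro c hc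
    rw [gS_prod hG hH hc]
  rw [step1]
  have hmaps : ∀ c ∈ prodComplex G H, topOf c ∈ G ×ˢ H := by
    intro c hc
    obtain ⟨hcsub, hcne, hchain⟩ := mem_prodComplex.1 hc
    exact hcsub (topOf_spec hchain hcne).1
  rw [← Finset.sum_fiberwise_of_maps_to hmaps]
  have step2 : ∀ q ∈ G ×ˢ H,
      ∑ c ∈ (prodComplex G H).filter (fun c => topOf c = q),
        (-1 : ℤ) ^ (c.card + 1) * (gS G (topOf c).1 * gS H (topOf c).2) ^ m
      = (-1 : ℤ) ^ N q * (gS G q.1 * gS H q.2) ^ m := by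
    intro q hq
    have : ∀ c ∈ (prodComplex G H).filter (fun c => topOf c = q),
        (-1 : ℤ) ^ (c.card + 1) * (gS G (topOf c).1 * gS H (topOf c).2) ^ m
        = (-1 : ℤ) ^ (c.card + 1) * (gS G q.1 * gS H q.2) ^ m := by
      intro c hc
      rw [(mem_filter.1 hc).2]
    rw [Finset.sum_congr rfl this, ← Finset.sum_mul, fiber_sum hG hH hq]
  rw [Finset.sum_congr rfl step2, Finset.sum_product]
  rw [Finset.sum_mul_sum]
  apply Finset.sum_congr rfl
  intro a _
  apply Finset.sum_congr rfl
  intro b _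
  rw [mul_pow, N_def]
  have : (-1 : ℤ) ^ (a.card + b.card) = (-1 : ℤ) ^ (a.card + 1) * (-1 : ℤ) ^ (b.card + 1) := by
    rw [← pow_add]
    apply neg_one_pow_congr
    omega
  rw [this]
  ring


end PF

/-- Product formula: `w_m(G · H) = w_m(G) · w_m(H)`. -/
theorem product_formula (G H : Finset (Finset ℕ))
    (hG : IsComplex G) (hH : IsComplex H) (m : ℕ) (hm : 1 ≤ m) :
    wm m (prodComplex G H) = wm m G * wm m H := by
  exact PF.product_formulaG G H hG hH m hm
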